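/- For all n ≥ 2 and h ≥ 1, every element s of the Kadourek inverse semigroup S_n^{(h)} satisfies s² = s³. -/

import Mathlib

universe u v

/-- Formal inverse of a word in letters `(variable, inverted?)`. -/
def invFree (w : List (List ℕ × Bool)) : List (List ℕ × Bool) :=
  w.reverse.map (fun p => (p.1, !p.2))

/-- The letter sequence of the `{·,⁻¹}`-term `w_n^{(h)}` (`h ≥ 1`), letters being pairs
`(variable, inverted?)` with variables indexed by `h`-tuples from `{0,…,n-1}`. -/
def wLetters (n : ℕ) : ℕ → List (List ℕ × Bool)
  | 0 => []
  | 1 => (List.range n).map (fun i => ([i], false)) ++ (List.range n).map (fun i => ([i], true))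
  | h + 2 =>
    ((List.range n).map (fun j => (wLetters n (h + 1)).map (fun p => (p.1 ++ [j], p.2)))).flatten
      ++ ((List.range n).map
        (fun j => invFree ((wLetters n (h + 1)).map (fun p => (p.1 ++ [j], p.2))))).flatten

namespace Kad

abbrev Lam := List ℕ × Bool

/-- non-cancelling adjacency (matching `FreeGroup.reduce`'s cancellation test). -/
def P (a b : Lam) : Prop := ¬(a.1 = b.1 ∧ a.2 = !b.2)

lemma reduce_eq_self : ∀ {L : List Lam}, List.Chain' P L → FreeGroup.reduce L = L
  | [], _ => rfl
  | [x], _ => rfl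
  | x :: y :: t, h => by
    have h1 : List.Chain' P (y :: t) := (List.isChain_cons_cons.mp h).2
    have h2 : P x y := (List.isChain_cons_cons.mp h).1
    rw [FreeGroup.reduce.cons, reduce_eq_self h1]
    exact if_neg h2

lemma mk_inj {L1 L2 : List Lam} (h1 : List.Chain' P L1) (h2 : List.Chain' P L2)
    (h : FreeGroup.mk L1 = FreeGroup.mk L2) : L1 = L2 := by
  have := congrArg FreeGroup.toWord h
  rwa [FreeGroup.toWord_mk, FreeGroup.toWord_mk, reduce_eq_self h1, reduce_eq_self h2] at this

lemma invFree_eq_invRev (w : List Lam) : invFree w = FreeGroup.invRev w := by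
  simp [invFree, FreeGroup.invRev, List.map_reverse]

@[simp] lemma invFree_length (w : List Lam) : (invFree w).length = w.length := by
  simp [invFree]

@[simp] lemma invFree_invFree (w : List Lam) : invFree (invFree w) = w := by
  simp [invFree, List.map_reverse, List.map_map, Function.comp_def]

lemma invFree_getElem? (w : List Lam) {i : ℕ} (hi : i < w.length) :
    (invFree w)[i]? = (w[w.length - 1 - i]?).map (fun p => (p.1, !p.2)) := by
  rw [invFree, List.getElem?_map, List.getElem?_reverse (by simpa using hi)]

lemma chain'_invFree {w : List Lam} (h : List.Chain' P w) : List.Chain' P (invFree w) := by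
  have he : invFree w = (w.map (fun p => (p.1, !p.2))).reverse := by
    simp [invFree, List.map_reverse]
  rw [he]
  unfold List.Chain'
  rw [List.isChain_reverse, List.isChain_map]
  refine List.IsChain.imp ?_ h
  intro a b hab
  show P (b.1, !b.2) (a.1, !a.2)
  rintro ⟨e1, e2⟩
  exact hab ⟨e1.symm, by revert e2; cases a.2 <;> cases b.2 <;> simp⟩

lemma invFree_eq_self {X : List Lam} (hr : List.Chain' P X) (h : invFree X = X) : X = [] := by
  by_contra hne
  have hm : 0 < X.length := List.length_pos_iff.mpr hne
  rcases Nat.even_or_odd X.length with he | ho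
  · obtain ⟨t, ht⟩ : ∃ t, X.length = 2 * t + 2 := by
      rcases he with ⟨t, ht⟩
      exact ⟨t - 1, by omega⟩
    have hgl := List.isChain_iff_getElem.mp hr t (by omega)
    have h1 : X[t]? = (X[t+1]?).map (fun p => (p.1, !p.2)) := by
      have h2 := congrArg (fun L => L[t]?) h
      rw [invFree_getElem? X (by omega)] at h2
      have h3 : X.length - 1 - t = t + 1 := by omega
      rw [h3] at h2
      exact h2.symm
    rw [List.getElem?_eq_getElem (by omega), List.getElem?_eq_getElem (by omega)] at h1
    simp only [Option.map_some, Option.some.injEq] at h1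
    have hP : P (X.get ⟨t, by omega⟩) (X.get ⟨t + 1, by omega⟩) := hgl
    simp only [List.get_eq_getElem] at hP
    exact hP ⟨by rw [h1], by rw [h1]⟩
  · obtain ⟨t, ht⟩ : ∃ t, X.length = 2 * t + 1 := by
      rcases ho with ⟨t, ht⟩
      exact ⟨t, by omega⟩
    have h1 : X[t]? = (X[t]?).map (fun p => (p.1, !p.2)) := by
      have h2 := congrArg (fun L => L[t]?) h
      rw [invFree_getElem? X (by omega)] at h2
      have h3 : X.length - 1 - t = t := by omega
      rw [h3] at h2
      exact h2.symm
    rw [List.getElem?_eq_getElem (by omega)] at h1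
    simp only [Option.map_some, Option.some.injEq] at h1
    have := congrArg Prod.snd h1
    simp at this

/-- squarefreeness (index form) -/
def Sqf (W : List Lam) : Prop :=
  ∀ a d, 0 < d → a + 2 * d ≤ W.length → ∃ i, i < d ∧ W[a+i]? ≠ W[a+d+i]?

lemma chain'_take_drop {W : List Lam} (h : List.Chain' P W) (x m : ℕ) :
    List.Chain' P ((W.drop x).take m) := by
  unfold List.Chain' at h ⊢
  rw [List.isChain_iff_getElem] at h ⊢
  intro i hi
  have hlen : ((W.drop x).take m).length ≤ W.length - x := by
    simp [List.length_take, List.length_drop]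
  have hW : ∀ (j : ℕ) (hj : j < ((W.drop x).take m).length),
      ((W.drop x).take m).get ⟨j, by omega⟩ = W.get ⟨x + j, by omega⟩ := by
    intro j hj
    have h1 : ((W.drop x).take m)[j]? = W[x+j]? := by
      rw [List.getElem?_take, if_pos (by simp [List.length_take] at hj; omega), List.getElem?_drop]
    rw [List.getElem?_eq_getElem hj, List.getElem?_eq_getElem (by omega)] at h1
    simpa using h1
  show P (((W.drop x).take m).get ⟨i, by omega⟩) (((W.drop x).take m).get ⟨i+1, by omega⟩)
  rw [hW i (by omega), hW (i+1) (by omega)]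
  exact h (x + i) (by omega)


/-! ### Block structure -/

def app (k : ℕ) (p : Lam) : Lam := (p.1 ++ [k], p.2)

lemma app_inj (k : ℕ) : Function.Injective (app k) := by
  intro p q h
  have h1 := congrArg Prod.fst h
  have h2 := congrArg Prod.snd h
  simp only [app] at h1 h2
  exact Prod.ext (List.append_left_injective [k] h1) h2

def blocks (n g : ℕ) : List (List Lam) :=
  (List.range n).map (fun j => (wLetters n g).map (app j))
    ++ (List.range n).map (fun j => invFree ((wLetters n g).map (app j)))

lemma wLetters_succ_succ (n g : ℕ) : wLetters n (g+2) = (blocks n (g+1)).flatten := by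
  rw [blocks, List.flatten_append]
  rfl

lemma blocks_length (n g : ℕ) : (blocks n g).length = 2 * n := by
  simp [blocks, two_mul]

lemma blocks_mem_length {n g : ℕ} {B : List Lam} (hB : B ∈ blocks n g) :
    B.length = (wLetters n g).length := by
  simp only [blocks, List.mem_append, List.mem_map, List.mem_range] at hB
  rcases hB with ⟨j, _, rfl⟩ | ⟨j, _, rfl⟩ <;> simp

lemma wLetters_len1 (n : ℕ) : (wLetters n 1).length = 2 * n := by
  simp [wLetters, two_mul]

lemma wLetters_len2 (n g : ℕ) :
    (wLetters n (g+2)).length = 2 * n * (wLetters n (g+1)).length := by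
  rw [wLetters_succ_succ, List.length_flatten]
  have h : (blocks n (g+1)).map List.length
      = List.replicate (2*n) (wLetters n (g+1)).length := by
    rw [List.eq_replicate_iff]
    refine ⟨by rw [List.length_map, blocks_length], ?_⟩
    intro b hb
    rcases List.mem_map.mp hb with ⟨B, hB, rfl⟩
    exact blocks_mem_length hB
  rw [h, List.sum_replicate, smul_eq_mul]

lemma wLetters_pos {n : ℕ} (hn : 0 < n) : ∀ g, 0 < (wLetters n (g+1)).length
  | 0 => by rw [wLetters_len1]; omega
  | g+1 => by
      rw [wLetters_len2]
      exact Nat.mul_pos (by omega) (wLetters_pos hn g)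

lemma flatten_getElem? {L : ℕ} (hL : 0 < L) :
    ∀ (F : List (List Lam)), (∀ B ∈ F, B.length = L) → ∀ i, i < F.length * L →
      F.flatten[i]? = (F[i/L]?).bind (fun B => B[i % L]?)
  | [], _, i, hi => by simp at hi
  | B :: F, hF, i, hi => by
    have hBL : B.length = L := hF B List.mem_cons_self
    rw [List.flatten_cons]
    by_cases hiL : i < L
    · rw [List.getElem?_append, if_pos (by omega)]
      rw [Nat.div_eq_of_lt hiL, Nat.mod_eq_of_lt hiL]
      simp
    · have hlen : (B::F).length * L = F.length * L + L := by
        rw [List.length_cons]; ring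
      rw [List.getElem?_append, if_neg (by omega), hBL]
      have hrec := flatten_getElem? hL F (fun C hC => hF C (List.mem_cons_of_mem _ hC)) (i - L)
        (by omega)
      rw [hrec]
      have h1 : i / L = (i - L)/L + 1 := by
        conv_lhs => rw [show i = (i - L) + L by omega]
        rw [Nat.add_div_right _ hL]
      have h2 : i % L = (i - L) % L := by
        conv_lhs => rw [show i = (i - L) + L by omega]
        rw [Nat.add_mod_right]
      rw [h1, h2]
      simp

lemma blocks_getElem?_lt {n g k : ℕ} (hk : k < n) :
    (blocks n g)[k]? = some ((wLetters n g).map (app k)) := by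
  rw [blocks, List.getElem?_append, if_pos (by simpa using hk)]
  rw [List.getElem?_map, List.getElem?_range hk]
  rfl

lemma blocks_getElem?_ge {n g k : ℕ} (hk1 : n ≤ k) (hk2 : k < 2*n) :
    (blocks n g)[k]? = some (invFree ((wLetters n g).map (app (k - n)))) := by
  rw [blocks, List.getElem?_append, if_neg (by simp; omega)]
  simp only [List.length_map, List.length_range]
  rw [List.getElem?_map, List.getElem?_range (by omega)]
  rfl

lemma wget {n : ℕ} (hn : 0 < n) (g i : ℕ) (hi : i < 2*n*(wLetters n (g+1)).length) :
    (wLetters n (g+2))[i]? =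
      if i / (wLetters n (g+1)).length < n
      then ((wLetters n (g+1))[i % (wLetters n (g+1)).length]?).map
        (app (i / (wLetters n (g+1)).length))
      else ((wLetters n (g+1))[(wLetters n (g+1)).length - 1
          - i % (wLetters n (g+1)).length]?).map
        (fun p => (p.1 ++ [i / (wLetters n (g+1)).length - n], !p.2)) := by
  set L := (wLetters n (g+1)).length with hLdef
  have hL : 0 < L := wLetters_pos hn g
  have hflat := flatten_getElem? hL (blocks n (g+1)) (fun B hB => blocks_mem_length hB) i
    (by rw [blocks_length]; exact hi)
  rw [wLetters_succ_succ, hflat]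
  have hklt : i / L < 2*n := (Nat.div_lt_iff_lt_mul hL).mpr (by omega)
  have hmod : i % L < L := Nat.mod_lt _ hL
  by_cases hk : i / L < n
  · rw [if_pos hk, blocks_getElem?_lt hk]
    rw [Option.bind_some, List.getElem?_map]
  · rw [if_neg hk, blocks_getElem?_ge (by omega) hklt]
    rw [Option.bind_some]
    rw [invFree_getElem? _ (by simpa using hmod)]
    simp only [List.length_map]
    rw [List.getElem?_map, Option.map_map]
    rfl

lemma wcls {n : ℕ} (hn : 0 < n) {g i : ℕ} {p : Lam}
    (hi : i < 2*n*(wLetters n (g+1)).length)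
    (hp : (wLetters n (g+2))[i]? = some p) :
    p.1.getLast? = some ((i / (wLetters n (g+1)).length) % n) := by
  rw [wget hn g i hi] at hp
  set L := (wLetters n (g+1)).length with hLdef
  have hL : 0 < L := wLetters_pos hn g
  have hklt : i / L < 2*n := (Nat.div_lt_iff_lt_mul hL).mpr (by omega)
  split_ifs at hp with hk
  · rcases Option.map_eq_some_iff.mp hp with ⟨q, _, rfl⟩
    simp only [app]
    rw [List.getLast?_concat, Nat.mod_eq_of_lt hk]
  · rcases Option.map_eq_some_iff.mp hp with ⟨q, _, rfl⟩
    simp only []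
    rw [List.getLast?_concat]
    have : i / L % n = (i / L - n) % n := Nat.mod_eq_sub_mod (by omega)
    rw [this, Nat.mod_eq_of_lt (by omega)]

lemma wfirst {n : ℕ} (hn : 0 < n) : ∀ g, (wLetters n (g+1))[0]? = some (List.replicate (g+1) 0, false)
  | 0 => by
    show ((List.range n).map (fun i => (([i], false) : Lam))
      ++ (List.range n).map (fun i => ([i], true)))[0]? = _
    rw [List.getElem?_append, if_pos (by simpa using hn)]
    rw [List.getElem?_map, List.getElem?_range hn]
    rfl
  | g+1 => by
    have hL : 0 < (wLetters n (g+1)).length := wLetters_pos hn g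
    rw [wget hn g 0 (by have : 0 < 2*n*(wLetters n (g+1)).length := Nat.mul_pos (by omega) hL; omega)]
    rw [Nat.zero_div, if_pos hn, Nat.zero_mod, wfirst hn g]
    simp only [Option.map_some, app]
    rw [← List.replicate_succ']

lemma wlast {n : ℕ} (hn : 0 < n) :
    ∀ g, (wLetters n (g+1))[(wLetters n (g+1)).length - 1]? =
      some (List.replicate g 0 ++ [n-1], true)
  | 0 => by
    show ((List.range n).map (fun i => (([i], false) : Lam))
      ++ (List.range n).map (fun i => ([i], true)))[((List.range n).map (fun i => (([i], false) : Lam))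
      ++ (List.range n).map (fun i => ([i], true))).length - 1]? = _
    have hlen : ((List.range n).map (fun i => (([i], false) : Lam))
      ++ (List.range n).map (fun i => (([i], true) : Lam))).length = 2*n := by simp [two_mul]
    rw [hlen]
    rw [List.getElem?_append, if_neg (by simp; omega)]
    simp only [List.length_map, List.length_range]
    rw [List.getElem?_map, List.getElem?_range (by omega)]
    have : 2*n-1-n = n-1 := by omega
    rw [this]
    rfl
  | g+1 => by
    set L := (wLetters n (g+1)).length with hLdef
    have hL : 0 < L := wLetters_pos hn g
    obtain ⟨N, hN⟩ : ∃ N, 2*n = N+1 := ⟨2*n-1, by omega⟩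
    have hNL : (N+1)*L = N*L + L := by ring
    have h2nL : 2*n*L = N*L + L := by rw [hN]; ring
    have hidx : (wLetters n (g+2)).length - 1 = 2*n*L - 1 := by rw [wLetters_len2]
    have hie : 2*n*L - 1 = L*N + (L-1) := by
      have : L*N = N*L := by ring
      omega
    rw [hidx, hie]
    have hdiv : (L*N + (L-1)) / L = N := by
      rw [Nat.mul_add_div hL, Nat.div_eq_of_lt (by omega)]
      omega
    have hmod : (L*N + (L-1)) % L = L-1 := by
      rw [Nat.mul_add_mod, Nat.mod_eq_of_lt (by omega)]
    rw [wget hn g _ (by rw [← hLdef]; omega)]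
    rw [hdiv, hmod]
    rw [if_neg (by omega)]
    have h0 : L - 1 - (L-1) = 0 := by omega
    rw [h0, wfirst hn g]
    simp only [Option.map_some]
    have hNn : N - n = n - 1 := by omega
    rw [hNn]
    rfl

lemma wmid {n : ℕ} (hn : 0 < n) (g : ℕ) :
    (wLetters n (g+2))[n * (wLetters n (g+1)).length]? =
      some ((List.replicate g 0 ++ [n-1]) ++ [0], false) := by
  set L := (wLetters n (g+1)).length with hLdef
  have hL : 0 < L := wLetters_pos hn g
  have hnL : n*L < 2*n*L := by
    have h1 : 0 < n*L := Nat.mul_pos hn hL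
    have h2 : 2*n*L = n*L + n*L := by ring
    omega
  rw [wget hn g _ hnL]
  rw [Nat.mul_div_cancel _ hL, Nat.mul_mod_left]
  rw [if_neg (by omega)]
  have h0 : n - n = 0 := by omega
  rw [Nat.sub_zero, wlast hn g]
  simp only [Option.map_some, h0]
  rfl

lemma first_ne_mid {n : ℕ} (hn : 2 ≤ n) (g : ℕ) :
    (List.replicate (g+2) (0:ℕ)) ≠ (List.replicate g 0 ++ [n-1]) ++ [0] := by
  intro e
  have h := congrArg (fun l => l[g]?) e
  rw [List.getElem?_replicate, if_pos (by omega)] at h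
  rw [List.getElem?_append, if_pos (by simp)] at h
  rw [List.getElem?_append_right (by simp)] at h
  simp at h
  omega

/-! ### Squarefreeness -/

lemma flapp_inj (k : ℕ) : Function.Injective (fun p : Lam => (p.1 ++ [k], !p.2)) := by
  intro p q h
  have h1 := congrArg Prod.fst h
  have h2 := congrArg Prod.snd h
  simp only [] at h1 h2
  refine Prod.ext (List.append_left_injective [k] h1) ?_
  revert h2; cases p.2 <;> cases q.2 <;> simp

lemma mod_succ_ne {n m : ℕ} (hn : 2 ≤ n) : m % n ≠ (m+1) % n := by
  intro e
  have h1 : n ∣ (m+1) - m := (Nat.modEq_iff_dvd' (by omega)).mp e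
  rw [show m+1-m = 1 by omega] at h1
  have := Nat.le_of_dvd (by omega) h1
  omega

lemma wget' {n : ℕ} (hn : 0 < n) (g i L : ℕ) (hLdef : (wLetters n (g+1)).length = L)
    (hi : i < 2*n*L) :
    (wLetters n (g+2))[i]? =
      if i / L < n
      then ((wLetters n (g+1))[i % L]?).map (app (i / L))
      else ((wLetters n (g+1))[L - 1 - i % L]?).map
        (fun p => (p.1 ++ [i / L - n], !p.2)) := by
  subst hLdef; exact wget hn g i hi

lemma wcls' {n : ℕ} (hn : 0 < n) {g i L : ℕ} {p : Lam} (hLdef : (wLetters n (g+1)).length = L)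
    (hi : i < 2*n*L) (hp : (wLetters n (g+2))[i]? = some p) :
    p.1.getLast? = some ((i / L) % n) := by
  subst hLdef; exact wcls hn hi hp

lemma wmid' {n : ℕ} (hn : 0 < n) (g L : ℕ) (hLdef : (wLetters n (g+1)).length = L) :
    (wLetters n (g+2))[n * L]? = some ((List.replicate g 0 ++ [n-1]) ++ [0], false) := by
  subst hLdef; exact wmid hn g

theorem sqf_w {n : ℕ} (hn : 2 ≤ n) : ∀ h', Sqf (wLetters n h') := by
  intro h'
  induction h' using Nat.strong_induction_on with
  | _ h' IH =>
  match h', IH with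
  | 0, _ =>
    intro a d hd hbound
    simp [wLetters] at hbound
    omega
  | 1, _ =>
    intro a d hd hbound
    rw [wLetters_len1] at hbound
    refine ⟨0, hd, ?_⟩
    have hget : ∀ i, i < 2*n →
        (wLetters n 1)[i]? = some (if i < n then (([i], false) : Lam) else ([i-n], true)) := by
      intro i hi
      show ((List.range n).map (fun i => (([i], false) : Lam))
        ++ (List.range n).map (fun i => ([i], true)))[i]? = _
      by_cases hin : i < n
      · rw [List.getElem?_append, if_pos (by simpa using hin), List.getElem?_map,
          List.getElem?_range hin, if_pos hin]
        rfl
      · rw [List.getElem?_append, if_neg (by simp; omega)]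
        simp only [List.length_map, List.length_range]
        rw [List.getElem?_map, List.getElem?_range (by omega), if_neg hin]
        rfl
    simp only [Nat.add_zero]
    rw [hget a (by omega), hget (a+d) (by omega)]
    intro e
    rw [Option.some_inj] at e
    split_ifs at e with h1 h2 h2
    · have := congrArg Prod.fst e; simp at this; omega
    · have := congrArg Prod.snd e; simp at this
    · have := congrArg Prod.snd e; simp at this
    · have := congrArg Prod.fst e; simp at this; omega
  | (g+2), IH =>
    intro a d hd hbound
    obtain ⟨L, hLdef⟩ : ∃ L, (wLetters n (g+1)).length = L := ⟨_, rfl⟩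
    have hL : 0 < L := hLdef ▸ wLetters_pos (by omega) g
    have hlen2 : (wLetters n (g+2)).length = 2*n*L := by rw [wLetters_len2, hLdef]
    rw [hlen2] at hbound
    by_contra hsq
    push_neg at hsq
    -- key class equality
    have hkey : ∀ x, a ≤ x → x < a + d → (x / L) % n = ((x+d) / L) % n := by
      intro x hx1 hx2
      obtain ⟨p, hp⟩ : ∃ p, (wLetters n (g+2))[x]? = some p :=
        ⟨_, List.getElem?_eq_getElem (by omega)⟩
      have hp2 : (wLetters n (g+2))[x+d]? = some p := by
        have h0 := hsq (x - a) (by omega)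
        rw [show a + (x-a) = x by omega, show a + d + (x-a) = x + d by omega] at h0
        rw [← h0]; exact hp
      have c1 := wcls' (n := n) (by omega) hLdef (by omega) hp
      have c2 := wcls' (n := n) (by omega) hLdef (by omega) hp2
      exact Option.some_inj.mp (c1.symm.trans c2)
    -- final contradiction once d = n*L is known
    have hfin : n * L ∣ d → False := by
      intro hdvd
      have hd1 : n*L ≤ d := Nat.le_of_dvd hd hdvd
      have h2 : 2*(n*L) = 2*n*L := by ring
      have hdnl : d = n*L := by omega
      have ha0 : a = 0 := by omega
      have h00 := hsq 0 hd
      rw [ha0, hdnl] at h00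
      simp only [Nat.add_zero, Nat.zero_add] at h00
      have hw1 : (wLetters n (g+2))[(0:ℕ)]? = some (List.replicate (g+2) 0, false) :=
        wfirst (by omega) (g+1)
      rw [hw1, wmid' (by omega) g L hLdef] at h00
      rw [Option.some_inj, Prod.mk.injEq] at h00
      exact first_ne_mid hn g h00.1
    -- boundary inside first copy
    have hbd1 : ∀ j, a ≤ j → j + 1 < a + d → L ∣ (j+1) → n * L ∣ d := by
      intro j hj1 hj2 hjdvd
      obtain ⟨m, hm⟩ := hjdvd
      obtain ⟨m', rfl⟩ : ∃ m', m = m' + 1 := ⟨m - 1, by cases m with | zero => simp at hm | succ k => omega⟩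
      have hmm : L*(m'+1) = L*m' + L := by ring
      have hjd : j / L = m' := by
        rw [show j = L*m' + (L-1) by omega]
        rw [Nat.mul_add_div hL, Nat.div_eq_of_lt (by omega)]
        omega
      have hj1d : (j+1) / L = m' + 1 := by rw [hm]; exact Nat.mul_div_cancel_left _ hL
      have s1 := hkey j hj1 (by omega)
      have s2 := hkey (j+1) (by omega) (by omega)
      by_cases hLd : L ∣ (j + 1 + d)
      · have hLdvd : L ∣ d := by
          have h9 := Nat.dvd_sub hLd ⟨m'+1, hm⟩
          rwa [show j+1+d - (j+1) = d by omega] at h9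
        obtain ⟨e, he⟩ := hLdvd
        have hjdd : (j+d)/L = m' + e := by
          have h10 : L*(m'+e) = L*m' + L*e := by ring
          rw [show j+d = L*(m'+e) + (L-1) by omega]
          rw [Nat.mul_add_div hL, Nat.div_eq_of_lt (by omega)]
          omega
        rw [hjd, hjdd] at s1
        have hnd : n ∣ e := by
          have h11 := (Nat.modEq_iff_dvd' (by omega)).mp s1
          rwa [show m'+e-m' = e by omega] at h11
        obtain ⟨e', rfl⟩ := hnd
        exact ⟨e', by rw [he]; ring⟩
      · exfalso
        have h7 : (j+d+1)/L = (j+d)/L := by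
          have h8 := Nat.succ_div (a := j+d) (b := L)
          rw [if_neg (by rw [show j+d+1 = j+1+d by omega]; exact hLd)] at h8
          omega
        rw [hjd] at s1
        rw [hj1d, show j+1+d = j+d+1 by omega, h7] at s2
        exact mod_succ_ne hn (s1.trans s2.symm)
    -- boundary inside second copy
    have hbd2 : ∀ j, a + d ≤ j → j + 1 < a + 2*d → L ∣ (j+1) → n * L ∣ d := by
      intro j hj1 hj2 hjdvd
      obtain ⟨m, hm⟩ := hjdvd
      obtain ⟨m', rfl⟩ : ∃ m', m = m' + 1 := ⟨m - 1, by cases m with | zero => simp at hm | succ k => omega⟩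
      have hmm : L*(m'+1) = L*m' + L := by ring
      have hj1d : (j+1) / L = m' + 1 := by rw [hm]; exact Nat.mul_div_cancel_left _ hL
      have s1 := hkey (j - d) (by omega) (by omega)
      have s2 := hkey (j+1-d) (by omega) (by omega)
      rw [show j-d+d = j by omega] at s1
      rw [show j+1-d+d = j+1 by omega] at s2
      by_cases hLd : L ∣ (j + 1 - d)
      · have hLdvd : L ∣ d := by
          have h9 := Nat.dvd_sub ⟨m'+1, hm⟩ hLd
          rwa [show (j+1) - (j+1-d) = d by omega] at h9
        obtain ⟨e, he⟩ := hLdvd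
        have hle : e ≤ m'+1 := Nat.le_of_mul_le_mul_left (by omega) hL
        have hsub : j+1-d = L*(m'+1-e) := by
          have h5 : L*(m'+1-e) + L*e = L*(m'+1) := by
            rw [← Nat.mul_add, show m'+1-e+e = m'+1 by omega]
          omega
        have h6 : (j+1-d)/L = m'+1-e := by rw [hsub]; exact Nat.mul_div_cancel_left _ hL
        rw [h6, hj1d] at s2
        have hnd : n ∣ e := by
          have h11 := (Nat.modEq_iff_dvd' (by omega)).mp s2
          rwa [show (m'+1) - (m'+1-e) = e by omega] at h11
        obtain ⟨e', rfl⟩ := hnd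
        exact ⟨e', by rw [he]; ring⟩
      · exfalso
        have hjd : j / L = m' := by
          rw [show j = L*m' + (L-1) by omega]
          rw [Nat.mul_add_div hL, Nat.div_eq_of_lt (by omega)]
          omega
        have h7 : (j-d+1)/L = (j-d)/L := by
          have h8 := Nat.succ_div (a := j-d) (b := L)
          rw [if_neg (by rw [show j-d+1 = j+1-d by omega]; exact hLd)] at h8
          omega
        rw [hjd] at s1
        rw [show j+1-d = j-d+1 by omega, h7] at s2
        exact mod_succ_ne hn (by rw [← hj1d]; exact s1.symm.trans s2)
    by_cases hA : ∃ j, a ≤ j ∧ j + 1 < a + d ∧ L ∣ (j+1)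
    · obtain ⟨j, h1, h2, h3⟩ := hA; exact hfin (hbd1 j h1 h2 h3)
    by_cases hA' : ∃ j, a + d ≤ j ∧ j + 1 < a + 2*d ∧ L ∣ (j+1)
    · obtain ⟨j, h1, h2, h3⟩ := hA'; exact hfin (hbd2 j h1 h2 h3)
    push_neg at hA hA'
    have hk1 : (a+d-1)/L = a/L := by
      refine Nat.le_antisymm ?_ (Nat.div_le_div_right (by omega))
      by_contra hlt
      push_neg at hlt
      have h12 : (a/L + 1) * L ≤ a+d-1 := (Nat.le_div_iff_mul_le hL).mp (by omega)
      have h13 : a < (a/L+1)*L := by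
        have hdm := Nat.div_add_mod a L
        have hmod := Nat.mod_lt a hL
        have hre : (a/L+1)*L = L*(a/L) + L := by ring
        omega
      exact hA ((a/L+1)*L - 1) (by omega) (by omega)
        (by rw [show (a/L+1)*L - 1 + 1 = (a/L+1)*L by omega]; exact ⟨a/L+1, by ring⟩)
    have hk2 : (a+2*d-1)/L = (a+d)/L := by
      refine Nat.le_antisymm ?_ (Nat.div_le_div_right (by omega))
      by_contra hlt
      push_neg at hlt
      have h12 : ((a+d)/L + 1) * L ≤ a+2*d-1 := (Nat.le_div_iff_mul_le hL).mp (by omega)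
      have h13 : a+d < ((a+d)/L+1)*L := by
        have hdm := Nat.div_add_mod (a+d) L
        have hmod := Nat.mod_lt (a+d) hL
        have hre : ((a+d)/L+1)*L = L*((a+d)/L) + L := by ring
        omega
      exact hA' (((a+d)/L+1)*L - 1) (by omega) (by omega)
        (by rw [show ((a+d)/L+1)*L - 1 + 1 = ((a+d)/L+1)*L by omega]; exact ⟨(a+d)/L+1, by ring⟩)
    have hk21 : (a+d)/L = a/L ∨ (a+d)/L = a/L + 1 := by
      have h14 : (a+d-1)/L ≤ (a+d)/L := Nat.div_le_div_right (by omega)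
      have h15 : (a+d)/L ≤ (a+d-1)/L + 1 := by
        conv_lhs => rw [show a+d = (a+d-1)+1 by omega]
        rw [Nat.succ_div]
        split <;> omega
      omega
    rcases hk21 with hsame | hnext
    · -- same block case
      have hall : ∀ x, a ≤ x → x < a + 2*d → x/L = a/L ∧ x % L = a % L + (x - a) := by
        intro x hx1 hx2
        have hdle : x/L ≤ (a+2*d-1)/L := Nat.div_le_div_right (by omega)
        have hdge : a/L ≤ x/L := Nat.div_le_div_right hx1
        rw [hk2, hsame] at hdle
        have hxk : x/L = a/L := by omega
        refine ⟨hxk, ?_⟩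
        have e1 := Nat.div_add_mod x L
        have e2 := Nat.div_add_mod a L
        rw [hxk] at e1
        omega
      have hrb : a % L + 2*d ≤ L := by
        have h16 := (hall (a+2*d-1) (by omega) (by omega)).2
        have h17 : (a+2*d-1) % L < L := Nat.mod_lt _ hL
        omega
      have hklt2n : a/L < 2*n := (Nat.div_lt_iff_lt_mul hL).mpr (by omega)
      by_cases hkn : a/L < n
      · obtain ⟨i, hi, hne⟩ := IH (g+1) (by omega) (a % L) d hd (by omega)
        apply hne
        have hx1 := hsq i (by omega)
        have hga : (wLetters n (g+2))[a+i]? = ((wLetters n (g+1))[a % L + i]?).map (app (a/L)) := by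
          rw [wget' (by omega) g _ L hLdef (by omega)]
          rw [(hall (a+i) (by omega) (by omega)).1, (hall (a+i) (by omega) (by omega)).2,
            if_pos hkn, show a % L + (a+i-a) = a % L + i by omega]
        have hgb : (wLetters n (g+2))[a+d+i]? = ((wLetters n (g+1))[a % L + d + i]?).map (app (a/L)) := by
          rw [wget' (by omega) g _ L hLdef (by omega)]
          rw [(hall (a+d+i) (by omega) (by omega)).1, (hall (a+d+i) (by omega) (by omega)).2,
            if_pos hkn, show a % L + (a+d+i-a) = a % L + d + i by omega]
        rw [hga, hgb] at hx1
        exact Option.map_injective (app_inj (a/L)) hx1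
      · obtain ⟨i, hi, hne⟩ := IH (g+1) (by omega) (L - a % L - 2*d) d hd (by omega)
        apply hne
        have hx1 := hsq (d - 1 - i) (by omega)
        have hga : (wLetters n (g+2))[a+(d-1-i)]?
            = ((wLetters n (g+1))[(L - a % L - 2*d)+d+i]?).map (fun p => (p.1 ++ [a/L-n], !p.2)) := by
          rw [wget' (by omega) g _ L hLdef (by omega)]
          rw [(hall (a+(d-1-i)) (by omega) (by omega)).1, (hall (a+(d-1-i)) (by omega) (by omega)).2,
            if_neg (by omega), show L - 1 - (a % L + (a+(d-1-i)-a)) = (L - a % L - 2*d)+d+i by omega]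
        have hgb : (wLetters n (g+2))[a+d+(d-1-i)]?
            = ((wLetters n (g+1))[(L - a % L - 2*d)+i]?).map (fun p => (p.1 ++ [a/L-n], !p.2)) := by
          rw [wget' (by omega) g _ L hLdef (by omega)]
          rw [(hall (a+d+(d-1-i)) (by omega) (by omega)).1, (hall (a+d+(d-1-i)) (by omega) (by omega)).2,
            if_neg (by omega), show L - 1 - (a % L + (a+d+(d-1-i)-a)) = (L - a % L - 2*d)+i by omega]
        rw [hga, hgb] at hx1
        exact (Option.map_injective (flapp_inj (a/L-n)) hx1).symm
    · -- adjacent block case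
      have hx := hkey a (Nat.le_refl a) (by omega)
      rw [hnext] at hx
      exact mod_succ_ne hn hx

/-! ### Reducedness -/

lemma wget1 {n i : ℕ} (hi : i < 2*n) :
    (wLetters n 1)[i]? = some (if i < n then (([i], false) : Lam) else ([i-n], true)) := by
  show ((List.range n).map (fun i => (([i], false) : Lam))
    ++ (List.range n).map (fun i => ([i], true)))[i]? = _
  by_cases hin : i < n
  · rw [List.getElem?_append, if_pos (by simpa using hin), List.getElem?_map,
      List.getElem?_range hin, if_pos hin]
    rfl
  · rw [List.getElem?_append, if_neg (by simp; omega)]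
    simp only [List.length_map, List.length_range]
    rw [List.getElem?_map, List.getElem?_range (by omega), if_neg hin]
    rfl

lemma blocks_cls {n g k : ℕ} (hn : 0 < n) (hk : k < 2*n) {p : Lam} {B : List Lam}
    (hB : (blocks n g)[k]? = some B) (hp : p ∈ B) : p.1.getLast? = some (k % n) := by
  by_cases hkn : k < n
  · rw [blocks_getElem?_lt hkn, Option.some_inj] at hB
    subst hB
    rcases List.mem_map.mp hp with ⟨q, _, rfl⟩
    simp only [app]
    rw [List.getLast?_concat, Nat.mod_eq_of_lt hkn]
  · rw [blocks_getElem?_ge (by omega) hk, Option.some_inj] at hB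
    subst hB
    rw [invFree] at hp
    rcases List.mem_map.mp hp with ⟨q, hq, rfl⟩
    rcases List.mem_map.mp (List.mem_reverse.mp hq) with ⟨q', _, rfl⟩
    simp only [app]
    rw [List.getLast?_concat]
    have h1 : k % n = (k - n) % n := Nat.mod_eq_sub_mod (by omega)
    rw [h1, Nat.mod_eq_of_lt (by omega)]

theorem red_w {n : ℕ} (hn : 2 ≤ n) : ∀ h', List.Chain' P (wLetters n h')
  | 0 => List.isChain_nil
  | 1 => by
    unfold List.Chain'
    rw [List.isChain_iff_getElem]
    intro i hi
    have hlen := wLetters_len1 n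
    rw [hlen] at hi
    have v1 := wget1 (n := n) (i := i) (by omega)
    have v2 := wget1 (n := n) (i := i+1) (by omega)
    rw [List.getElem?_eq_getElem (by omega)] at v1
    rw [List.getElem?_eq_getElem (by omega)] at v2
    rw [Option.some_inj] at v1 v2
    rw [v1, v2]
    split_ifs with h1 h2 h2
    · rintro ⟨e1, e2⟩; simp at e2
    · rintro ⟨e1, e2⟩; simp at e1; omega
    · omega
    · rintro ⟨e1, e2⟩; simp at e2
  | g+2 => by
    have hL : 0 < (wLetters n (g+1)).length := wLetters_pos (by omega) g
    have hprev := red_w hn (g+1)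
    have hne : [] ∉ blocks n (g+1) := by
      intro hmem
      have := blocks_mem_length hmem
      simp at this
      omega
    rw [wLetters_succ_succ]
    unfold List.Chain'
    rw [List.isChain_flatten hne]
    constructor
    · intro B hB
      have hmapchain : ∀ j : ℕ, List.Chain' P ((wLetters n (g+1)).map (app j)) := by
        intro j
        unfold List.Chain'
        rw [List.isChain_map]
        refine List.IsChain.imp ?_ hprev
        rintro a b hab ⟨e1, e2⟩
        exact hab ⟨List.append_left_injective [j] e1, e2⟩
      simp only [blocks, List.mem_append, List.mem_map, List.mem_range] at hB
      rcases hB with ⟨j, _, rfl⟩ | ⟨j, _, rfl⟩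
      · exact hmapchain j
      · exact chain'_invFree (hmapchain j)
    · rw [List.isChain_iff_getElem]
      intro k hk
      rw [blocks_length] at hk
      have b1 : (blocks n (g+1))[k]? = some ((blocks n (g+1)).get ⟨k, by have := blocks_length n (g+1); omega⟩) := by
        rw [List.getElem?_eq_getElem (by have := blocks_length n (g+1); omega)]
        simp
      have b2 : (blocks n (g+1))[k+1]? = some ((blocks n (g+1)).get ⟨k+1, by have := blocks_length n (g+1); omega⟩) := by
        rw [List.getElem?_eq_getElem (by have := blocks_length n (g+1); omega)]
        simp
      intro x hx y hy
      have hxB : x ∈ (blocks n (g+1)).get ⟨k, by have := blocks_length n (g+1); omega⟩ := by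
        rcases List.mem_getLast?_eq_getLast hx with ⟨hne', rfl⟩
        exact List.getLast_mem hne'
      have hyC : y ∈ (blocks n (g+1)).get ⟨k+1, by have := blocks_length n (g+1); omega⟩ :=
        List.mem_of_mem_head? hy
      have c1 := blocks_cls (by omega) (by omega) b1 hxB
      have c2 := blocks_cls (by omega) (by omega) b2 hyC
      rintro ⟨e1, e2⟩
      rw [e1, c2] at c1
      exact mod_succ_ne hn (Option.some_inj.mp c1.symm)

/-! ### Core cancellation argument -/

lemma take_split {W : List Lam} {x y : ℕ} (hxy : x ≤ y) :
    W.take y = W.take x ++ (W.drop x).take (y - x) := by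
  conv_lhs => rw [show y = x + (y-x) by omega]
  exact List.take_add

lemma seg_len {W : List Lam} {x y : ℕ} (hxy : x ≤ y) (hy : y ≤ W.length) :
    ((W.drop x).take (y - x)).length = y - x := by
  simp only [List.length_take, List.length_drop]
  omega

lemma mk_take_eq {W : List Lam} {x y : ℕ} (hxy : x ≤ y) :
    FreeGroup.mk (W.take y) = FreeGroup.mk (W.take x) * FreeGroup.mk ((W.drop x).take (y-x)) := by
  rw [FreeGroup.mul_mk, ← take_split hxy]

lemma extract {W : List Lam} (hr : List.Chain' P W) {x y : ℕ} {g : FreeGroup (List ℕ)}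
    (e : FreeGroup.mk (W.take y) = FreeGroup.mk (W.take x) * g) :
    ∃ E : List Lam, List.Chain' P E ∧ g = FreeGroup.mk E ∧
      ((x ≤ y ∧ E = (W.drop x).take (y-x)) ∨ (y < x ∧ E = invFree ((W.drop y).take (x-y)))) := by
  rcases le_or_gt x y with hxy | hxy
  · refine ⟨(W.drop x).take (y-x), chain'_take_drop hr x _, ?_, Or.inl ⟨hxy, rfl⟩⟩
    have h1 := (mk_take_eq (W := W) hxy).symm.trans e
    exact (mul_left_cancel h1).symm
  · refine ⟨invFree ((W.drop y).take (x-y)), chain'_invFree (chain'_take_drop hr y _),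
      ?_, Or.inr ⟨hxy, rfl⟩⟩
    have h2 : FreeGroup.mk (W.take x)
        = FreeGroup.mk (W.take y) * FreeGroup.mk ((W.drop y).take (x-y)) :=
      mk_take_eq (le_of_lt hxy)
    rw [h2, mul_assoc] at e
    have e' : FreeGroup.mk (W.take y) * 1
        = FreeGroup.mk (W.take y) * (FreeGroup.mk ((W.drop y).take (x-y)) * g) := by
      rw [mul_one]; exact e
    have h3 := (mul_left_cancel e').symm
    have h4 : g = (FreeGroup.mk ((W.drop y).take (x-y)))⁻¹ :=
      (inv_eq_of_mul_eq_one_right h3).symm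
    rw [h4, FreeGroup.inv_mk, invFree_eq_invRev]

lemma core {W : List Lam} (hr : List.Chain' P W) (hs : Sqf W) {q q1 q2 : ℕ}
    (hq : q ≤ W.length) (hq1 : q1 ≤ W.length) (hq2 : q2 ≤ W.length)
    {g : FreeGroup (List ℕ)}
    (e1 : FreeGroup.mk (W.take q1) = FreeGroup.mk (W.take q) * g)
    (e2 : FreeGroup.mk (W.take q2) = FreeGroup.mk (W.take q1) * g) : q1 = q := by
  obtain ⟨E1, hE1r, hgE1, hc1⟩ := extract hr e1
  obtain ⟨E2, hE2r, hgE2, hc2⟩ := extract hr e2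
  have hE : E1 = E2 := mk_inj hE1r hE2r (hgE1.symm.trans hgE2)
  subst hE
  rcases hc1 with ⟨hqq1, hE1⟩ | ⟨hq1q, hE1⟩ <;> rcases hc2 with ⟨hq1q2, hE2⟩ | ⟨hq2q1, hE2⟩
  · have l1 : E1.length = q1 - q := by rw [hE1]; exact seg_len hqq1 hq1
    have l2 : E1.length = q2 - q1 := by rw [hE2]; exact seg_len hq1q2 hq2
    by_cases hd : q1 - q = 0
    · omega
    · exfalso
      obtain ⟨i, hi, hne⟩ := hs q (q1 - q) (by omega) (by omega)
      apply hne
      have hgeq := hE1.symm.trans hE2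
      have gi := congrArg (fun Lst => Lst[i]?) hgeq
      rw [List.getElem?_take, if_pos hi, List.getElem?_drop] at gi
      rw [List.getElem?_take, if_pos (by omega), List.getElem?_drop] at gi
      rw [show q1 + i = q + (q1-q) + i by omega] at gi
      exact gi
  · have l1 : E1.length = q1 - q := by rw [hE1]; exact seg_len hqq1 hq1
    have l2 : E1.length = q1 - q2 := by
      rw [hE2, invFree_length]; exact seg_len (le_of_lt hq2q1) hq1
    have hq2q : q2 = q := by omega
    subst hq2q
    have hinv := hE2.symm.trans hE1
    have hempty := invFree_eq_self (chain'_take_drop hr q2 _) hinv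
    have hlen0 := congrArg List.length hempty
    rw [seg_len hqq1 hq1] at hlen0
    simp at hlen0
    omega
  · have l1 : E1.length = q - q1 := by
      rw [hE1, invFree_length]; exact seg_len (le_of_lt hq1q) hq
    have l2 : E1.length = q2 - q1 := by rw [hE2]; exact seg_len hq1q2 hq2
    have hq2q : q2 = q := by omega
    subst hq2q
    have hinv := hE1.symm.trans hE2
    have hempty := invFree_eq_self (chain'_take_drop hr q1 _) hinv
    have hlen0 := congrArg List.length hempty
    rw [seg_len (le_of_lt hq1q) hq] at hlen0
    simp at hlen0
    omega
  · exfalso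
    have hseg : (W.drop q1).take (q - q1) = (W.drop q2).take (q1 - q2) := by
      have h1 := hE1.symm.trans hE2
      have h2 := congrArg invFree h1
      rwa [invFree_invFree, invFree_invFree] at h2
    have l1 := seg_len (le_of_lt hq1q) hq
    have l2 := seg_len (le_of_lt hq2q1) hq1
    have hl : q - q1 = q1 - q2 := by rw [← l1, hseg, l2]
    obtain ⟨i, hi, hne⟩ := hs q2 (q1 - q2) (by omega) (by omega)
    apply hne
    have gi := congrArg (fun Lst => Lst[i]?) hseg.symm
    rw [List.getElem?_take, if_pos hi, List.getElem?_drop] at gi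
    rw [List.getElem?_take, if_pos (by omega), List.getElem?_drop] at gi
    rw [show q1 + i = q2 + (q1-q2) + i by omega] at gi
    exact gi

end Kad

/-- Partial transformations of the set `{0, 1, …, |w_n^{(h)}|}`. -/
def PTrans (n h : ℕ) : Type :=
  Fin ((wLetters n h).length + 1) → Option (Fin ((wLetters n h).length + 1))

/-- Composition of partial maps: `pcomp f g` is "apply `g`, then `f`". -/
def pcomp {α : Type*} (f g : α → Option α) : α → Option α := fun q => (g q).bind f

/-- The inverse of a partial injective map on `Fin N`. -/
def pinv {N : ℕ} (f : Fin N → Option (Fin N)) : Fin N → Option (Fin N) :=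
  fun q => (List.finRange N).find? (fun p => decide (f p = some q))

/-- Kadourek's generator `χ_v`: it sends `q-1 ↦ q` exactly when the `q`-th letter of
`w_n^{(h)}` is `x_v`, and `q ↦ q-1` exactly when the `q`-th letter of `w_n^{(h)}` is `x_v⁻¹`. -/
def chi (n h : ℕ) (v : List ℕ) : PTrans n h := fun a =>
  if h1 : a.val < (wLetters n h).length ∧ (wLetters n h)[a.val]? = some (v, false) then
    some ⟨a.val + 1, by have := h1.1; omega⟩
  else if 0 < a.val ∧ (wLetters n h)[a.val - 1]? = some (v, true) then
    some ⟨a.val - 1, by have := a.isLt; omega⟩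
  else none

/-- Membership in Kadourek's inverse semigroup `S_n^{(h)}`: the closure of the generators
`χ_v` (`v` an `h`-tuple over `{0,…,n-1}`) and their inverses under composition. -/
inductive SnhMem (n h : ℕ) : PTrans n h → Prop
  | gen : ∀ v : List ℕ, v.length = h → (∀ i ∈ v, i < n) → SnhMem n h (chi n h v)
  | geninv : ∀ v : List ℕ, v.length = h → (∀ i ∈ v, i < n) → SnhMem n h (pinv (chi n h v))
  | mul : ∀ f g : PTrans n h, SnhMem n h f → SnhMem n h g → SnhMem n h (pcomp f g)

namespace Kad

def Phi (n h : ℕ) (x : ℕ) : FreeGroup (List ℕ) := FreeGroup.mk ((wLetters n h).take x)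

lemma chi_spec {n h : ℕ} (v : List ℕ) {q q' : Fin ((wLetters n h).length + 1)}
    (hq : chi n h v q = some q') :
    Phi n h q'.val = Phi n h q.val * FreeGroup.mk [(v, false)] := by
  unfold chi at hq
  split_ifs at hq with h1 h2
  · obtain ⟨hlt, hget⟩ := h1
    rw [Option.some_inj] at hq
    have hval : q'.val = q.val + 1 := by rw [← hq]
    rw [hval]
    unfold Phi
    rw [List.take_succ, hget, ← FreeGroup.mul_mk]
    rfl
  · obtain ⟨hpos, hget⟩ := h2
    rw [Option.some_inj] at hq
    have hval : q'.val = q.val - 1 := by rw [← hq]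
    rw [hval]
    unfold Phi
    have hsplit : (wLetters n h).take q.val
        = (wLetters n h).take (q.val - 1) ++ [((v,true) : Lam)] := by
      conv_lhs => rw [show q.val = (q.val - 1) + 1 by omega]
      rw [List.take_succ, hget]
      rfl
    have hone : FreeGroup.mk [((v,true) : Lam)] * FreeGroup.mk [((v,false) : Lam)] = 1 := by
      have hh : FreeGroup.mk [((v,true) : Lam)] = (FreeGroup.mk [((v,false) : Lam)])⁻¹ := by
        rw [FreeGroup.inv_mk]
        rfl
      rw [hh, inv_mul_cancel]
    rw [hsplit, ← FreeGroup.mul_mk, mul_assoc, hone, mul_one]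

lemma exists_g {n h : ℕ} (f : PTrans n h) (hf : SnhMem n h f) :
    ∃ g : FreeGroup (List ℕ), ∀ q q' : Fin ((wLetters n h).length + 1),
      f q = some q' → Phi n h q'.val = Phi n h q.val * g := by
  induction hf with
  | gen v hv1 hv2 => exact ⟨FreeGroup.mk [(v, false)], fun q q' hq => chi_spec v hq⟩
  | geninv v hv1 hv2 =>
    refine ⟨(FreeGroup.mk [(v, false)])⁻¹, fun q q' hq => ?_⟩
    unfold pinv at hq
    have hfind := List.find?_some hq
    rw [decide_eq_true_eq] at hfind
    have hspec := chi_spec v hfind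
    rw [hspec, mul_assoc, mul_inv_cancel, mul_one]
  | mul f' g' hf' hg' ihf ihg =>
    obtain ⟨gf, hgf⟩ := ihf
    obtain ⟨gg, hgg⟩ := ihg
    refine ⟨gg * gf, fun q q' hq => ?_⟩
    unfold pcomp at hq
    rcases Option.bind_eq_some_iff.mp hq with ⟨m, hm1, hm2⟩
    rw [hgf m q' hm2, hgg q m hm1, mul_assoc]

end Kad

/-- For all `n ≥ 2` and `h ≥ 1`, every element `s` of the Kadourek inverse
semigroup `S_n^{(h)}` satisfies `s² = s³`. -/
theorem kadourek_sq_eq_cube (n h : ℕ) (hn : 2 ≤ n) (hh : 1 ≤ h) :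
    ∀ f : PTrans n h, SnhMem n h f → pcomp f f = pcomp (pcomp f f) f := by
  intro f hf
  obtain ⟨g, hg⟩ := Kad.exists_g f hf
  have hr : List.Chain' Kad.P (wLetters n h) := Kad.red_w hn h
  have hs : Kad.Sqf (wLetters n h) := Kad.sqf_w hn h
  funext q
  simp only [pcomp]
  cases hfq : f q with
  | none => rfl
  | some q1 =>
    show f q1 = (f q1).bind f
    cases hfq1 : f q1 with
    | none => rfl
    | some q2 =>
      have e1 := hg q q1 hfq
      have e2 := hg q1 q2 hfq1
      unfold Kad.Phi at e1 e2
      have hv : q1.val = q.val :=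
        Kad.core hr hs (by have := q.isLt; omega) (by have := q1.isLt; omega)
          (by have := q2.isLt; omega) e1 e2
      have hq1q : q1 = q := Fin.ext hv
      show some q2 = f q2
      have hq2 : q2 = q1 := by
        rw [hq1q] at hfq1
        rw [hfq] at hfq1
        exact (Option.some_inj.mp hfq1).symm
      rw [hq2] at hfq1 ⊢
      exact hfq1.symm
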